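/- arXiv:2012.09540 — 3 statements merged into one kernel-verified Lean document; each statement's English description precedes it below -/
import Mathlib

section
/- Kravchuk orthogonality: for all k, l ≤ n, ∑_{i=0}^{n} C(n,i) K^n_k(i) K^n_l(i) = 2^n C(n,k) δ_{k=l}, where K^n_k(m) := ∑_{j=0}^{k} (-1)^j C(m,j) C(n-m,k-j). -/
open Finset

/-- The Kravchuk polynomial value K^n_k(m). -/
def krav (n k m : ℕ) : ℤ :=
  ∑ j ∈ range (k + 1), (-1 : ℤ) ^ j * (m.choose j : ℤ) * ((n - m).choose (k - j) : ℤ)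

-- Lemma 1a: fiber card
lemma fiber_card (n k j : ℕ) (A : Finset (Fin n)) (hj : j ≤ k) :
    (((univ : Finset (Fin n)).powersetCard k).filter (fun S => (S ∩ A).card = j)).card
      = A.card.choose j * ((n - A.card).choose (k - j)) := by
  have hAc : Aᶜ.card = n - A.card := by
    rw [card_compl, Fintype.card_fin]
  rw [← hAc, ← Finset.card_powersetCard, ← Finset.card_powersetCard,
    ← Finset.card_product]
  apply Finset.card_nbij' (fun S => (S ∩ A, S ∩ Aᶜ)) (fun p => p.1 ∪ p.2)
  · intro S hS
    simp only [mem_coe, mem_filter, mem_powersetCard_univ] at hS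
    have hsplit : (S ∩ A).card + (S ∩ Aᶜ).card = k := by
      rw [← card_union_of_disjoint, ← inter_union_distrib_left, union_compl,
        inter_univ, hS.1]
      exact disjoint_left.2 fun x hx hx' => (mem_compl.1 (mem_of_mem_inter_right hx')) (mem_of_mem_inter_right hx)
    simp only [mem_coe, mem_product, mem_powersetCard]
    exact ⟨⟨inter_subset_right, hS.2⟩, inter_subset_right, by omega⟩
  · intro p hp
    simp only [mem_coe, mem_product, mem_powersetCard] at hp
    obtain ⟨⟨hB, hBc⟩, hC, hCc⟩ := hp
    have hdisj : Disjoint p.1 p.2 :=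
      (disjoint_compl_right.mono hB hC)
    simp only [mem_coe, mem_filter, mem_powersetCard_univ]
    constructor
    · rw [card_union_of_disjoint hdisj, hBc, hCc]; omega
    · have : (p.1 ∪ p.2) ∩ A = p.1 := by
        rw [union_inter_distrib_right, inter_eq_left.2 hB,
          disjoint_iff_inter_eq_empty.1, union_empty]
        exact disjoint_compl_left.mono_left hC
      rw [this, hBc]
  · intro S hS
    dsimp only
    rw [← inter_union_distrib_left, union_compl, inter_univ]
  · intro p hp
    simp only [mem_coe, mem_product, mem_powersetCard] at hp
    obtain ⟨⟨hB, hBc⟩, hC, hCc⟩ := hp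
    have h1 : (p.1 ∪ p.2) ∩ A = p.1 := by
      rw [union_inter_distrib_right, inter_eq_left.2 hB,
        disjoint_iff_inter_eq_empty.1, union_empty]
      exact disjoint_compl_left.mono_left hC
    have h2 : (p.1 ∪ p.2) ∩ Aᶜ = p.2 := by
      rw [union_inter_distrib_right, inter_eq_left.2 hC,
        disjoint_iff_inter_eq_empty.1, empty_union]
      exact disjoint_compl_right.mono_left hB
    dsimp only
    rw [h1, h2]

lemma krav_eq (n k : ℕ) (A : Finset (Fin n)) :
    krav n k A.card = ∑ S ∈ (univ : Finset (Fin n)).powersetCard k, (-1:ℤ)^((S ∩ A).card) := by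
  rw [← Finset.sum_fiberwise_of_maps_to (g := fun S => (S ∩ A).card) (t := range (k+1))
    (fun S hS => by
      rw [mem_powersetCard_univ] at hS
      rw [mem_range, Nat.lt_succ_iff, ← hS]
      exact card_le_card inter_subset_left)]
  unfold krav
  refine Finset.sum_congr rfl fun j hj => ?_
  have hj' : j ≤ k := by rw [mem_range, Nat.lt_succ_iff] at hj; exact hj
  have : ∀ S ∈ ((univ : Finset (Fin n)).powersetCard k).filter (fun S => (S ∩ A).card = j),
      (-1:ℤ)^((S ∩ A).card) = (-1)^j := by
    intro S hS
    rw [(mem_filter.1 hS).2]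
  rw [Finset.sum_congr rfl this, Finset.sum_const, fiber_card n k j A hj',
    nsmul_eq_mul]
  push_cast
  ring

lemma kravSignSum (n : ℕ) (S T : Finset (Fin n)) :
    ∑ A ∈ (univ : Finset (Fin n)).powerset, (-1:ℤ)^((S ∩ A).card) * (-1)^((T ∩ A).card)
      = if S = T then 2^n else 0 := by
  have key : ∀ A : Finset (Fin n), (-1:ℤ)^((S ∩ A).card) * (-1)^((T ∩ A).card)
      = ∏ x ∈ A, ((if x ∈ S then (-1:ℤ) else 1) * (if x ∈ T then -1 else 1)) := by
    intro A
    rw [prod_mul_distrib]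
    congr 1
    · rw [prod_ite, prod_const, prod_const, one_pow, mul_one, filter_mem_eq_inter,
        inter_comm]
    · rw [prod_ite, prod_const, prod_const, one_pow, mul_one, filter_mem_eq_inter,
        inter_comm]
  have hp := Finset.prod_add
    (fun x => (if x ∈ S then (-1:ℤ) else 1) * (if x ∈ T then -1 else 1))
    (fun _ => (1:ℤ)) (univ : Finset (Fin n))
  simp only [prod_const_one, mul_one] at hp
  rw [Finset.sum_congr rfl (fun A _ => key A), ← hp]
  by_cases hST : S = T
  · subst hST
    rw [if_pos rfl]
    have : ∀ x ∈ (univ : Finset (Fin n)),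
        ((if x ∈ S then (-1:ℤ) else 1) * (if x ∈ S then -1 else 1) + 1) = 2 := by
      intro x _
      by_cases hx : x ∈ S <;> simp [hx]
    rw [Finset.prod_congr rfl this, prod_const, card_univ, Fintype.card_fin]
  · rw [if_neg hST]
    have : ∃ x, ¬ (x ∈ S ↔ x ∈ T) := by
      by_contra h
      push_neg at h
      exact hST (Finset.ext fun x => h x)
    obtain ⟨x, hx⟩ := this
    apply Finset.prod_eq_zero (mem_univ x)
    by_cases h1 : x ∈ S <;> by_cases h2 : x ∈ T <;> simp [h1, h2] at hx ⊢

theorem kravchuk_orthogonality (n k l : ℕ) (hk : k ≤ n) (hl : l ≤ n) :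
    (∑ i ∈ range (n + 1), (n.choose i : ℤ) * krav n k i * krav n l i)
      = 2 ^ n * (n.choose k : ℤ) * (if k = l then 1 else 0) := by
  have hA : ∑ A ∈ (univ : Finset (Fin n)).powerset, krav n k A.card * krav n l A.card
      = ∑ i ∈ range (n + 1), (n.choose i : ℤ) * krav n k i * krav n l i := by
    rw [Finset.sum_powerset_apply_card (fun m => krav n k m * krav n l m)]
    rw [card_univ, Fintype.card_fin]
    refine Finset.sum_congr rfl fun i _ => ?_
    rw [nsmul_eq_mul, mul_assoc]
  rw [← hA]
  have step2 : ∀ A ∈ (univ : Finset (Fin n)).powerset,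
      krav n k A.card * krav n l A.card
        = ∑ S ∈ (univ : Finset (Fin n)).powersetCard k,
            ∑ T ∈ (univ : Finset (Fin n)).powersetCard l,
              (-1:ℤ)^((S ∩ A).card) * (-1)^((T ∩ A).card) := by
    intro A _
    rw [krav_eq, krav_eq, Finset.sum_mul_sum]
  rw [Finset.sum_congr rfl step2, Finset.sum_comm]
  have step3 : ∀ S ∈ (univ : Finset (Fin n)).powersetCard k,
      (∑ A ∈ (univ : Finset (Fin n)).powerset,
        ∑ T ∈ (univ : Finset (Fin n)).powersetCard l,
          (-1:ℤ)^((S ∩ A).card) * (-1)^((T ∩ A).card))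
      = ∑ T ∈ (univ : Finset (Fin n)).powersetCard l, (if S = T then (2:ℤ)^n else 0) := by
    intro S _
    rw [Finset.sum_comm]
    exact Finset.sum_congr rfl fun T _ => kravSignSum n S T
  rw [Finset.sum_congr rfl step3]
  have step4 : ∀ S ∈ (univ : Finset (Fin n)).powersetCard k,
      (∑ T ∈ (univ : Finset (Fin n)).powersetCard l, (if S = T then (2:ℤ)^n else 0))
      = if k = l then (2:ℤ)^n else 0 := by
    intro S hS
    rw [Finset.sum_ite_eq]
    rw [mem_powersetCard_univ] at hS
    by_cases hkl : k = l
    · rw [if_pos (by rw [mem_powersetCard_univ, hS, hkl]), if_pos hkl]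
    · rw [if_neg (by rw [mem_powersetCard_univ, hS]; exact hkl), if_neg hkl]
  rw [Finset.sum_congr rfl step4, Finset.sum_const, Finset.card_powersetCard,
    card_univ, Fintype.card_fin, nsmul_eq_mul]
  by_cases hkl : k = l <;> simp [hkl, mul_comm]
end

section
/- For natural numbers k and l with 0 ≤ l ≤ 11 and m = 12k + l, the quantity S'(m) := -m³/6 + 3m²/4 - 5m/6 - (-1)^m/8 satisfies S'(m) - S'(l) ∈ 2ℤ, i.e. S'(m) ≡ S'(l) mod 2. -/
/-- S'(m) = -m³/6 + 3m²/4 - 5m/6 - (-1)^m/8. -/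
def Sprime (m : ℕ) : ℚ :=
  -(m : ℚ) ^ 3 / 6 + 3 * (m : ℚ) ^ 2 / 4 - 5 * (m : ℚ) / 6 - (-1 : ℚ) ^ m / 8

theorem Sprime_period_twelve (k l : ℕ) (hl : l ≤ 11) :
    ∃ z : ℤ, Sprime (12 * k + l) - Sprime l = 2 * (z : ℚ) := by
  refine ⟨-(k : ℤ) * ((12*k+l)^2 + (12*k+l)*l + l^2) + 9*k*(6*k+l) - 5*k, ?_⟩
  have hpow : ((-1 : ℚ)) ^ (12 * k + l) = (-1 : ℚ) ^ l := by
    rw [pow_add, pow_mul]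
    norm_num
  simp only [Sprime, hpow]
  push_cast
  ring
end

section
/- With Ŝ(0)=0, Ŝ(1)=(n-2)(n-3)/16, Ŝ(2)=-(n-3)/8, Ŝ(3)=1/8, Ŝ(n)=-1/8 and Ŝ(k)=0 otherwise (n ≥ 4), the inverse Kravchuk transform S(m) := ∑_{k=0}^{n} Ŝ(k) K^n_k(m) equals -m³/6 + 3m²/4 - 5m/6 + n³/48 - n²/8 + 11n/48 - (-1)^m/8 for all 0 ≤ m ≤ n. -/
open Finset

/-- The spider-nest coefficients Ŝ(k) (for n ≥ 4). -/
def Shat (n k : ℕ) : ℚ :=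
  if k = 0 then 0
  else if k = 1 then ((n : ℚ) - 2) * ((n : ℚ) - 3) / 16
  else if k = 2 then -((n : ℚ) - 3) / 8
  else if k = 3 then 1 / 8
  else if k = n then -(1 / 8)
  else 0

lemma cast_choose_two' (x : ℕ) : ((x.choose 2 : ℕ) : ℚ) = x * (x - 1) / 2 := by
  induction x with
  | zero => simp
  | succ k ih =>
      rw [Nat.choose_succ_succ]
      push_cast at ih ⊢
      rw [show ((k.choose 1 : ℚ)) = k by simp]
      rw [ih]; ring

lemma cast_choose_three' (x : ℕ) : ((x.choose 3 : ℕ) : ℚ) = x * (x - 1) * (x - 2) / 6 := by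
  induction x with
  | zero => simp
  | succ k ih =>
      rw [Nat.choose_succ_succ]
      push_cast at ih ⊢
      have h2 : ((k.choose 2 : ℚ)) = k * (k - 1) / 2 := by
        exact cast_choose_two' k
      rw [h2, ih]; ring

lemma krav_one (n m : ℕ) : krav n 1 m = ((n - m : ℕ) : ℤ) - m := by
  simp [krav, Finset.sum_range_succ]
  ring

lemma krav_two (n m : ℕ) :
    krav n 2 m = ((n - m).choose 2 : ℤ) - m * ((n - m : ℕ) : ℤ) + (m.choose 2 : ℤ) := by
  simp [krav, Finset.sum_range_succ]
  ring

lemma krav_three (n m : ℕ) :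
    krav n 3 m = ((n - m).choose 3 : ℤ) - m * ((n - m).choose 2 : ℤ)
      + (m.choose 2 : ℤ) * ((n - m : ℕ) : ℤ) - (m.choose 3 : ℤ) := by
  simp [krav, Finset.sum_range_succ]
  ring

lemma krav_n (n m : ℕ) (hm : m ≤ n) : krav n n m = (-1) ^ m := by
  unfold krav
  rw [Finset.sum_eq_single_of_mem m (by simp; omega)]
  · simp
  · intro j hj hne
    simp only [Finset.mem_range] at hj
    rcases lt_or_gt_of_ne hne with h | h
    · have : (n - m) < (n - j) := by omega
      rw [Nat.choose_eq_zero_of_lt this]; ring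
    · rw [Nat.choose_eq_zero_of_lt h]; ring

theorem spider_nest_inverse_kravchuk (n : ℕ) (hn : 4 ≤ n) :
    ∀ m ≤ n,
      (∑ k ∈ range (n + 1), Shat n k * (krav n k m : ℚ))
        = -(m : ℚ) ^ 3 / 6 + 3 * (m : ℚ) ^ 2 / 4 - 5 * (m : ℚ) / 6
          + (n : ℚ) ^ 3 / 48 - (n : ℚ) ^ 2 / 8 + 11 * (n : ℚ) / 48
          - (-1 : ℚ) ^ m / 8 := by
  intro m hm
  have hsub : ({1, 2, 3, n} : Finset ℕ) ⊆ range (n + 1) := by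
    intro x hx
    simp only [Finset.mem_insert, Finset.mem_singleton] at hx
    simp only [Finset.mem_range]
    omega
  rw [← Finset.sum_subset hsub]
  · have hne : n ∉ ({1, 2, 3} : Finset ℕ) := by simp; omega
    rw [show ({1, 2, 3, n} : Finset ℕ) = insert 1 (insert 2 (insert 3 {n})) from rfl]
    rw [Finset.sum_insert (by simp; omega), Finset.sum_insert (by simp; omega),
      Finset.sum_insert (by simp; omega), Finset.sum_singleton]
    have hS1 : Shat n 1 = ((n : ℚ) - 2) * ((n : ℚ) - 3) / 16 := by simp [Shat]
    have hS2 : Shat n 2 = -((n : ℚ) - 3) / 8 := by simp [Shat]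
    have hS3 : Shat n 3 = 1 / 8 := by simp [Shat]
    have hSn : Shat n n = -(1 / 8) := by
      unfold Shat
      rw [if_neg (by omega), if_neg (by omega), if_neg (by omega), if_neg (by omega),
        if_pos rfl]
    rw [hS1, hS2, hS3, hSn, krav_one, krav_two, krav_three, krav_n n m hm]
    push_cast
    rw [cast_choose_two' (n - m), cast_choose_two' m, cast_choose_three' (n - m),
      cast_choose_three' m] at *
    push_cast [Nat.cast_sub hm]
    ring
  · intro x hx hnx
    simp only [Finset.mem_insert, Finset.mem_singleton, not_or] at hnx
    have : Shat n x = 0 := by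
      unfold Shat
      obtain ⟨h1, h2, h3, hn'⟩ := hnx
      rcases Nat.eq_zero_or_pos x with h0 | h0
      · simp [h0]
      · rw [if_neg (by omega), if_neg h1, if_neg h2, if_neg h3, if_neg hn']
    rw [this, zero_mul]
end
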